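/- Let E be a finite field with |E| = Q, let r ≥ 2 be an integer, let V and W be r-dimensional E-vector spaces, and let B : V × W → E be a non-degenerate bilinear pairing (i.e., B(v,·) ≡ 0 implies v = 0 and B(·,w) ≡ 0 implies w = 0). Then the number of quadruples (v, w, v′, w′) with v, v′ ∈ V \ {0} and w, w′ ∈ W \ {0} satisfying B(v,w) = 0, B(v′,w′) = 0, B(v,w′) = 1 and B(v′,w) = 1 equals Q^{2r−3} (Q^{r−1} − 1)(Q^r − 1). -/

import Mathlib

open Module LinearMap
set_option linter.unusedSectionVars false

section Helpers

variable {E : Type} [Field E] [Fintype E]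

lemma aux_card_module (M : Type*) [AddCommGroup M] [Module E M] [FiniteDimensional E M] :
    Nat.card M = Fintype.card E ^ finrank E M := by
  haveI : Finite M := Module.finite_of_finite E
  cases nonempty_fintype M
  rw [Nat.card_eq_fintype_card]
  exact card_eq_pow_finrank (K := E)

lemma aux_range_top {M : Type*} [AddCommGroup M] [Module E M]
    (f : M →ₗ[E] E) (hf : f ≠ 0) : LinearMap.range f = ⊤ := by
  obtain ⟨w₁, hw₁⟩ := DFunLike.ne_iff.mp hf
  simp only [LinearMap.zero_apply] at hw₁
  rw [LinearMap.range_eq_top]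
  intro c
  exact ⟨(c * (f w₁)⁻¹) • w₁, by rw [map_smul, smul_eq_mul]; field_simp⟩

lemma aux_finrank_ker {M : Type*} [AddCommGroup M] [Module E M] [FiniteDimensional E M]
    (f : M →ₗ[E] E) (hf : f ≠ 0) :
    finrank E (LinearMap.ker f) = finrank E M - 1 := by
  have h := f.finrank_range_add_finrank_ker
  rw [aux_range_top f hf, finrank_top, finrank_self] at h
  omega

lemma aux_fiber_card {M : Type*} [AddCommGroup M] [Module E M] [FiniteDimensional E M]
    (f : M →ₗ[E] E) (hf : f ≠ 0) (c : E) :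
    Nat.card {w : M // f w = c} = Fintype.card E ^ (finrank E M - 1) := by
  obtain ⟨w₁, hw₁⟩ := DFunLike.ne_iff.mp hf
  simp only [LinearMap.zero_apply] at hw₁
  set w₀ : M := (c * (f w₁)⁻¹) • w₁ with hw₀
  have hfw₀ : f w₀ = c := by rw [hw₀, map_smul, smul_eq_mul]; field_simp
  have e : {w : M // f w = c} ≃ LinearMap.ker f :=
    { toFun := fun w => ⟨w.1 - w₀, by simp [LinearMap.mem_ker, w.2, hfw₀]⟩
      invFun := fun u => ⟨u.1 + w₀, by
        have := u.2
        rw [LinearMap.mem_ker] at this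
        simp [this, hfw₀]⟩
      left_inv := fun w => by ext; simp
      right_inv := fun u => by ext; simp }
  rw [Nat.card_congr e, aux_card_module (E := E) (LinearMap.ker f), aux_finrank_ker f hf]

lemma aux_card_sigma_const {ι : Type*} [Finite ι] {f : ι → Type*} [∀ i, Finite (f i)]
    {n : ℕ} (h : ∀ i, Nat.card (f i) = n) :
    Nat.card (Σ i, f i) = Nat.card ι * n := by
  cases nonempty_fintype ι
  haveI : ∀ i, Fintype (f i) := fun i => Fintype.ofFinite _
  simp only [Nat.card_eq_fintype_card] at h ⊢
  rw [Fintype.card_sigma]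
  simp [h, Finset.sum_const]

end Helpers

lemma aux_card_ne {M : Type*} [Finite M] (a : M) :
    Nat.card {x : M // x ≠ a} = Nat.card M - 1 := by
  classical
  cases nonempty_fintype M
  simp only [Nat.card_eq_fintype_card, ne_eq]
  rw [Fintype.card_subtype_compl, Fintype.card_subtype_eq]
theorem count_hyperbolic_pairs_bilinear_pairing
    (Q r : ℕ) (hr : 2 ≤ r)
    (E : Type) [Field E] [Fintype E] (hE : Fintype.card E = Q)
    (V W : Type) [AddCommGroup V] [Module E V] [AddCommGroup W] [Module E W]
    [FiniteDimensional E V] [FiniteDimensional E W]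
    (hV : Module.finrank E V = r) (hW : Module.finrank E W = r)
    (B : V →ₗ[E] W →ₗ[E] E)
    (hnd1 : ∀ v : V, (∀ w : W, B v w = 0) → v = 0)
    (hnd2 : ∀ w : W, (∀ v : V, B v w = 0) → w = 0) :
    (Nat.card {x : V × W × V × W //
        x.1 ≠ 0 ∧ x.2.1 ≠ 0 ∧ x.2.2.1 ≠ 0 ∧ x.2.2.2 ≠ 0 ∧
        B x.1 x.2.1 = 0 ∧ B x.2.2.1 x.2.2.2 = 0 ∧
        B x.1 x.2.2.2 = 1 ∧ B x.2.2.1 x.2.1 = 1} : ℚ) =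
      (Q : ℚ) ^ (2 * r - 3) * ((Q : ℚ) ^ (r - 1) - 1) * ((Q : ℚ) ^ r - 1) := by
  classical
  haveI : Finite V := Module.finite_of_finite E
  haveI : Finite W := Module.finite_of_finite E
  set q := Fintype.card E with hq
  have hq2 : 2 ≤ q := Fintype.one_lt_card
  -- nonzero vectors give nonzero functionals
  have hBv : ∀ v : V, v ≠ 0 → B v ≠ 0 := by
    intro v hv h
    exact hv (hnd1 v (fun w => by rw [h]; rfl))
  have hBw : ∀ w : W, w ≠ 0 → B.flip w ≠ 0 := by
    intro w hw h
    refine hw (hnd2 w (fun v => ?_))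
    have := congrFun (congrArg DFunLike.coe h) v
    simpa using this
  -- the big equiv
  have e : {x : V × W × V × W //
        x.1 ≠ 0 ∧ x.2.1 ≠ 0 ∧ x.2.2.1 ≠ 0 ∧ x.2.2.2 ≠ 0 ∧
        B x.1 x.2.1 = 0 ∧ B x.2.2.1 x.2.2.2 = 0 ∧
        B x.1 x.2.2.2 = 1 ∧ B x.2.2.1 x.2.1 = 1} ≃
      Σ (v : {v : V // v ≠ 0}), Σ (w' : {w' : W // B v.1 w' = 1}),
        Σ (v' : {u : V // B u w'.1 = 0 ∧ u ∉ Submodule.span E {v.1}}),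
          {w : W // B v.1 w = 0 ∧ B v'.1 w = 1} :=
    { toFun := fun ⟨⟨v, w, v', w'⟩, h1, h2, h3, h4, h5, h6, h7, h8⟩ =>
        ⟨⟨v, h1⟩, ⟨w', h7⟩, ⟨v', h6, by
          intro hmem
          obtain ⟨a, ha⟩ := Submodule.mem_span_singleton.mp hmem
          rw [← ha] at h6
          simp only [map_smul, LinearMap.smul_apply, smul_eq_mul, h7, mul_one] at h6
          exact h3 (by rw [← ha, h6, zero_smul])⟩, ⟨w, h5, h8⟩⟩
      invFun := fun ⟨⟨v, hv⟩, ⟨w', hw'⟩, ⟨v', hv'1, hv'2⟩, ⟨w, hw1, hw2⟩⟩ =>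
        ⟨(v, w, v', w'), hv,
          (by intro h; rw [show w = 0 from h, map_zero] at hw2; exact one_ne_zero hw2.symm),
          (by intro h; apply hv'2; rw [show v' = (0:V) from h]; exact Submodule.zero_mem _),
          (by intro h; rw [show w' = 0 from h, map_zero] at hw'; exact one_ne_zero hw'.symm),
          hw1, hv'1, hw', hw2⟩
      left_inv := fun ⟨⟨v, w, v', w'⟩, h1, h2, h3, h4, h5, h6, h7, h8⟩ => rfl
      right_inv := fun ⟨⟨v, hv⟩, ⟨w', hw'⟩, ⟨v', hv'1, hv'2⟩, ⟨w, hw1, hw2⟩⟩ => rfl }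
  rw [Nat.card_congr e]
  -- count pieces
  have hcount : Nat.card (Σ (v : {v : V // v ≠ 0}), Σ (w' : {w' : W // B v.1 w' = 1}),
        Σ (v' : {u : V // B u w'.1 = 0 ∧ u ∉ Submodule.span E {v.1}}),
          {w : W // B v.1 w = 0 ∧ B v'.1 w = 1}) =
      (q ^ r - 1) * (q ^ (r - 1) * ((q ^ (r - 1) - 1) * q ^ (r - 2))) := by
    have hinner : ∀ (v : {v : V // v ≠ 0}) (w' : {w' : W // B v.1 w' = 1})
        (v' : {u : V // B u w'.1 = 0 ∧ u ∉ Submodule.span E {v.1}}),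
        Nat.card {w : W // B v.1 w = 0 ∧ B v'.1 w = 1} = q ^ (r - 2) := by
      intro v w' v'
      set K := LinearMap.ker (B v.1) with hK
      set g : K →ₗ[E] E := (B v'.1).comp K.subtype with hg
      have hgne : g ≠ 0 := by
        intro hg0
        obtain ⟨w₁, hw₁⟩ := DFunLike.ne_iff.mp (hBv v.1 v.2)
        simp only [LinearMap.zero_apply] at hw₁
        have hkerle : ∀ w : W, B v.1 w = 0 → B v'.1 w = 0 := by
          intro w hw
          have : g ⟨w, LinearMap.mem_ker.mpr hw⟩ = 0 := by rw [hg0]; rfl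
          simpa [hg] using this
        have hc : ∀ w : W, B v'.1 w = (B v'.1 w₁ * (B v.1 w₁)⁻¹) * B v.1 w := by
          intro w
          have hmem : B v.1 (w - (B v.1 w * (B v.1 w₁)⁻¹) • w₁) = 0 := by
            simp only [map_sub, map_smul, smul_eq_mul]
            field_simp
            ring
          have := hkerle _ hmem
          simp only [map_sub, map_smul, smul_eq_mul] at this
          rw [sub_eq_zero.mp this]; ring
        set c := B v'.1 w₁ * (B v.1 w₁)⁻¹ with hcdef
        have : v'.1 = c • v.1 := by
          have : ∀ w : W, B (v'.1 - c • v.1) w = 0 := by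
            intro w
            simp only [map_sub, LinearMap.sub_apply, map_smul, LinearMap.smul_apply,
              smul_eq_mul]
            rw [hc w]; ring
          have h0 := hnd1 _ this
          rwa [sub_eq_zero] at h0
        exact v'.2.2 (this ▸ Submodule.mem_span_singleton.mpr ⟨c, rfl⟩)
      have e3 : {w : W // B v.1 w = 0 ∧ B v'.1 w = 1} ≃ {u : K // g u = 1} :=
        { toFun := fun x => ⟨⟨x.1, LinearMap.mem_ker.mpr x.2.1⟩, x.2.2⟩
          invFun := fun u => ⟨u.1.1, LinearMap.mem_ker.mp u.1.2, u.2⟩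
          left_inv := fun x => rfl
          right_inv := fun u => rfl }
      rw [Nat.card_congr e3, aux_fiber_card g hgne 1,
        aux_finrank_ker (B v.1) (hBv v.1 v.2), hW, ← hq]
      congr 1
    have hv'count : ∀ (v : {v : V // v ≠ 0}) (w' : {w' : W // B v.1 w' = 1}),
        Nat.card {u : V // B u w'.1 = 0 ∧ u ∉ Submodule.span E {v.1}} =
          q ^ (r - 1) - 1 := by
      intro v w'
      have hw'ne : w'.1 ≠ 0 := by
        intro h
        exact one_ne_zero (by rw [← w'.2, h, map_zero] : (1:E) = 0)
      have hker : ∀ u : V, u ∈ LinearMap.ker (B.flip w'.1) ↔ B u w'.1 = 0 := by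
        intro u; rw [LinearMap.mem_ker]; rfl
      have e2 : {u : V // B u w'.1 = 0 ∧ u ∉ Submodule.span E {v.1}} ≃
          {u : LinearMap.ker (B.flip w'.1) // u ≠ 0} :=
        { toFun := fun x => ⟨⟨x.1, (hker x.1).mpr x.2.1⟩, by
            intro h
            apply x.2.2
            have : x.1 = 0 := congrArg Subtype.val h
            rw [this]; exact Submodule.zero_mem _⟩
          invFun := fun u => ⟨u.1.1, (hker u.1.1).mp u.1.2, by
            intro hmem
            obtain ⟨a, ha⟩ := Submodule.mem_span_singleton.mp hmem
            have h0 : B u.1.1 w'.1 = 0 := (hker u.1.1).mp u.1.2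
            rw [← ha] at h0
            simp only [map_smul, LinearMap.smul_apply, smul_eq_mul, w'.2, mul_one] at h0
            exact u.2 (Subtype.ext (by rw [← ha, h0, zero_smul]; rfl))⟩
          left_inv := fun x => rfl
          right_inv := fun u => rfl }
      rw [Nat.card_congr e2, aux_card_ne,
        aux_card_module (E := E) (LinearMap.ker (B.flip w'.1)),
        aux_finrank_ker (B.flip w'.1) (hBw w'.1 hw'ne), hV]
    have hw'c : ∀ (v : {v : V // v ≠ 0}),
        Nat.card {w' : W // B v.1 w' = 1} = q ^ (r - 1) := by
      intro v
      rw [aux_fiber_card (B v.1) (hBv v.1 v.2) 1, hW]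
    have houter : Nat.card {v : V // v ≠ 0} = q ^ r - 1 := by
      rw [aux_card_ne, aux_card_module (E := E) V, hV]
    have l2 : ∀ (v : {v : V // v ≠ 0}) (w' : {w' : W // B v.1 w' = 1}),
        Nat.card (Σ (v' : {u : V // B u w'.1 = 0 ∧ u ∉ Submodule.span E {v.1}}),
          {w : W // B v.1 w = 0 ∧ B v'.1 w = 1}) = (q ^ (r - 1) - 1) * q ^ (r - 2) := by
      intro v w'
      rw [aux_card_sigma_const (hinner v w'), hv'count v w']
    have l1 : ∀ (v : {v : V // v ≠ 0}),
        Nat.card (Σ (w' : {w' : W // B v.1 w' = 1}),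
          Σ (v' : {u : V // B u w'.1 = 0 ∧ u ∉ Submodule.span E {v.1}}),
            {w : W // B v.1 w = 0 ∧ B v'.1 w = 1}) =
          q ^ (r - 1) * ((q ^ (r - 1) - 1) * q ^ (r - 2)) := by
      intro v
      rw [aux_card_sigma_const (l2 v), hw'c v]
    rw [aux_card_sigma_const l1, houter]
  rw [hcount, hE]
  -- arithmetic over ℚ
  have hQ2 : 2 ≤ Q := hE ▸ hq2
  have h1 : (1 : ℕ) ≤ Q ^ r := Nat.one_le_pow _ _ (by omega)
  have h2 : (1 : ℕ) ≤ Q ^ (r - 1) := Nat.one_le_pow _ _ (by omega)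
  push_cast [h1, h2]
  have hpow : (Q : ℚ) ^ (r - 1) * (Q : ℚ) ^ (r - 2) = (Q : ℚ) ^ (2 * r - 3) := by
    rw [← pow_add]
    congr 1
    omega
  rw [← hpow]
  ring
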